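/- arXiv:2009.01156 — 2 statements merged into one kernel-verified Lean document; each statement's English description precedes it below -/
import Mathlib

section
/- Fix an integer L ≥ 3 and a positive integer r. There exists e* ∈ (0,1), depending only on L and r, such that for every N ∈ ℕ, every bare coupling e ∈ (0, e*], and every k with 0 ≤ k < N, the scale parameters satisfy r_{k+1} = r_k or L·r_{k+1} = r_k (i.e., r_k decreases at each step by at most one power of L). -/
/-- The running coupling `e_k = L^{-(N-k)/2} · e`. -/
noncomputable def runCoupling (L : ℕ) (e : ℝ) (N k : ℕ) : ℝ :=
  (L : ℝ) ^ (-(((N : ℝ) - (k : ℝ)) / 2)) * e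

/-- The scale parameter `r_k`: the smallest power of `L` that is at least
`(log(1/e_k))^r`. -/
noncomputable def scaleParam (L r : ℕ) (e : ℝ) (N k : ℕ) : ℕ :=
  sInf {p : ℕ | (∃ n : ℕ, p = L ^ n) ∧
    (Real.log (1 / runCoupling L e N k)) ^ r ≤ (p : ℝ)}

/-- Lemma 4.1(1): for sufficiently small coupling, the scale parameters `r_k`
decrease at each step by at most one power of `L`. -/
theorem scaleParam_step (L : ℕ) (hL : 3 ≤ L) (r : ℕ) (hr : 0 < r) :
    ∃ estar : ℝ, 0 < estar ∧ estar < 1 ∧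
      ∀ (N : ℕ) (e : ℝ), 0 < e → e ≤ estar → ∀ k : ℕ, k < N →
        scaleParam L r e N (k + 1) = scaleParam L r e N k ∨
        L * scaleParam L r e N (k + 1) = scaleParam L r e N k := by
  have hLpos : (0:ℝ) < L := by positivity
  have hL1 : (1:ℝ) < L := by
    have : (3:ℝ) ≤ L := by exact_mod_cast hL
    linarith
  have hrR : ((r:ℝ))⁻¹ ≠ 0 := by
    simp [Nat.cast_ne_zero, hr.ne']
  set c : ℝ := Real.log L / 2 with hc
  have hc0 : 0 < c := by
    have := Real.log_pos hL1
    simp [hc]; linarith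
  set D : ℝ := (L:ℝ) ^ ((r:ℝ)⁻¹) - 1 with hD
  have hD0 : 0 < D := by
    have : (1:ℝ) < (L:ℝ) ^ ((r:ℝ)⁻¹) := by
      exact (Real.one_lt_rpow_iff_of_pos hLpos).mpr (Or.inl ⟨hL1, by positivity⟩)
    simp [hD]; linarith
  refine ⟨Real.exp (-(c / D + 1)), Real.exp_pos _, ?_, ?_⟩
  · rw [Real.exp_lt_one_iff]
    have : 0 < c / D := div_pos hc0 hD0
    linarith
  intro N e he hee k hk
  -- log of running coupling
  have hlogrc : ∀ j : ℕ, Real.log (1 / runCoupling L e N j)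
      = ((N:ℝ) - j) / 2 * Real.log L + (- Real.log e) := by
    intro j
    unfold runCoupling
    rw [one_div, Real.log_inv,
      Real.log_mul (ne_of_gt (Real.rpow_pos_of_pos hLpos _)) he.ne',
      Real.log_rpow hLpos]
    ring
  set X : ℝ := Real.log (1 / runCoupling L e N (k+1)) with hX
  have hXk : Real.log (1 / runCoupling L e N k) = X + c := by
    rw [hX, hlogrc, hlogrc]
    push_cast
    rw [hc]
    ring
  have hloge : c / D + 1 ≤ - Real.log e := by
    have h1 : Real.log e ≤ Real.log (Real.exp (-(c / D + 1))) :=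
      Real.log_le_log he hee
    rw [Real.log_exp] at h1
    linarith
  have hXge : c / D + 1 ≤ X := by
    rw [hX, hlogrc]
    have h1 : (0:ℝ) ≤ ((N:ℝ) - (k+1:ℕ)) / 2 * Real.log L := by
      apply mul_nonneg
      · have : ((k:ℝ) + 1) ≤ (N:ℝ) := by exact_mod_cast hk
        push_cast
        linarith
      · exact (Real.log_nonneg (le_of_lt hL1))
    linarith
  have hX0 : 0 < X := lt_of_lt_of_le (by positivity) hXge
  -- key inequality : (X + c)^r ≤ L * X^r
  have hkey : (X + c) ^ r ≤ (L:ℝ) * X ^ r := by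
    have h1 : X + c ≤ (L:ℝ) ^ ((r:ℝ)⁻¹) * X := by
      have hcD : c ≤ D * X := by
        have := (div_le_iff₀ hD0).mp (by linarith : c / D ≤ X)
        linarith [this]
      calc X + c ≤ X + D * X := by linarith
        _ = (L:ℝ) ^ ((r:ℝ)⁻¹) * X := by rw [hD]; ring
    have h2 : (X + c) ^ r ≤ ((L:ℝ) ^ ((r:ℝ)⁻¹) * X) ^ r :=
      pow_le_pow_left₀ (by linarith) h1 r
    have h3 : ((L:ℝ) ^ ((r:ℝ)⁻¹) * X) ^ r = (L:ℝ) * X ^ r := by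
      rw [mul_pow, ← Real.rpow_natCast ((L:ℝ) ^ ((r:ℝ)⁻¹)) r,
        ← Real.rpow_mul (le_of_lt hLpos), inv_mul_cancel₀ (by exact_mod_cast hr.ne'),
        Real.rpow_one]
    linarith
  -- the defining sets are nonempty
  have hne : ∀ j : ℕ, {p : ℕ | (∃ n : ℕ, p = L ^ n) ∧
      (Real.log (1 / runCoupling L e N j)) ^ r ≤ (p : ℝ)}.Nonempty := by
    intro j
    obtain ⟨n, hn⟩ := pow_unbounded_of_one_lt
      ((Real.log (1 / runCoupling L e N j)) ^ r) hL1
    exact ⟨L ^ n, ⟨n, rfl⟩, by push_cast; exact le_of_lt hn⟩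
  obtain ⟨⟨a, ha⟩, hxa⟩ := Nat.sInf_mem (hne k)
  obtain ⟨⟨b, hb⟩, hxb⟩ := Nat.sInf_mem (hne (k+1))
  rw [ha, hXk] at hxa
  rw [hb, ← hX] at hxb
  -- r_{k+1} ≤ L^a
  have h1 : scaleParam L r e N (k+1) ≤ L ^ a := by
    apply Nat.sInf_le
    refine ⟨⟨a, rfl⟩, ?_⟩
    rw [← hX]
    push_cast
    calc X ^ r ≤ (X + c) ^ r := pow_le_pow_left₀ hX0.le (by linarith) r
      _ ≤ ((L:ℝ)) ^ a := by exact_mod_cast hxa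
  -- r_k ≤ L * L^b
  have h2 : scaleParam L r e N k ≤ L * L ^ b := by
    apply Nat.sInf_le
    refine ⟨⟨b + 1, by ring⟩, ?_⟩
    rw [hXk]
    push_cast
    calc (X + c) ^ r ≤ (L:ℝ) * X ^ r := hkey
      _ ≤ (L:ℝ) * (L:ℝ) ^ b := by
          apply mul_le_mul_of_nonneg_left _ (le_of_lt hLpos)
          calc X ^ r ≤ ((L ^ b : ℕ) : ℝ) := hxb
            _ = (L:ℝ) ^ b := by push_cast; ring
  -- squeeze between powers of L
  unfold scaleParam
  unfold scaleParam at h1 h2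
  rw [ha, hb]
  rw [hb] at h1
  rw [ha] at h2
  have hLn : 1 < L := lt_of_lt_of_le (by norm_num) hL
  have hba : b ≤ a := (Nat.pow_le_pow_iff_right hLn).mp h1
  have hab : a ≤ b + 1 := by
    have : L ^ a ≤ L ^ (b+1) := by
      calc L ^ a ≤ L * L ^ b := h2
        _ = L ^ (b+1) := by ring
    exact (Nat.pow_le_pow_iff_right hLn).mp this
  rcases Nat.lt_or_ge a (b+1) with h | h
  · left
    have : a = b := le_antisymm (Nat.lt_succ_iff.mp h) hba
    rw [this]
  · right
    have : a = b + 1 := le_antisymm hab h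
    rw [this]
    ring
end

section
/- Fix an integer L ≥ 3 and positive integers r and m, and set M = L^m. There exists e* ∈ (0,1), depending only on L and r, such that for every e ∈ (0, e*] there is N₀ ∈ ℕ (depending on L, m, r, e) with the property: for every N ≥ N₀ there exists an integer K with 0 ≤ K < N and M·r_K = L^{N−K} (so the iteration can be stopped exactly when the torus with L^{N−K} sites on a side consists of a single block of side M·r_K). -/
/-- Lemma 4.1(2): for sufficiently small coupling and `N` large enough, there is
an index `K < N` with `M · r_K = L^(N-K)`, where `M = L^m`. -/
theorem exists_stop_index (L : ℕ) (hL : 3 ≤ L) (r m : ℕ) (hr : 0 < r) (hm : 0 < m) :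
    ∃ estar : ℝ, 0 < estar ∧ estar < 1 ∧
      ∀ e : ℝ, 0 < e → e ≤ estar →
        ∃ N₀ : ℕ, ∀ N : ℕ, N₀ ≤ N →
          ∃ K : ℕ, K < N ∧ L ^ m * scaleParam L r e N K = L ^ (N - K) := by
  classical
  have hL1 : (1 : ℝ) < (L : ℝ) := by
    have : (3 : ℝ) ≤ (L : ℝ) := by exact_mod_cast hL
    linarith
  have hL0 : (0 : ℝ) < (L : ℝ) := by linarith
  refine ⟨Real.exp (-1), Real.exp_pos _, ?_, ?_⟩
  · exact Real.exp_lt_one_iff.mpr (by norm_num)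
  intro e he hee
  -- basic quantities
  set A : ℝ := Real.log (1 / e) with hAdef
  have hAe : A = -Real.log e := by rw [hAdef, one_div, Real.log_inv]
  have hA : 1 ≤ A := by
    have h1 : Real.exp 1 ≤ 1 / e := by
      rw [le_div_iff₀ he]
      calc Real.exp 1 * e = e * Real.exp 1 := by ring
        _ ≤ Real.exp (-1) * Real.exp 1 :=
          mul_le_mul_of_nonneg_right hee (Real.exp_pos 1).le
        _ = 1 := by rw [← Real.exp_add]; norm_num
    calc (1:ℝ) = Real.log (Real.exp 1) := (Real.log_exp 1).symm
      _ ≤ A := Real.log_le_log (Real.exp_pos 1) h1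
  set B : ℝ := Real.log L / 2 with hBdef
  have hlogL : 0 < Real.log L := Real.log_pos hL1
  have hB : 0 < B := by rw [hBdef]; positivity
  have hBA0 : ∀ k : ℕ, (1:ℝ) ≤ B * k + A := by
    intro k
    have : (0:ℝ) ≤ B * k := by positivity
    linarith
  have hF1 : ∀ k : ℕ, (1:ℝ) ≤ (B * k + A) ^ r := by
    intro k
    calc (1:ℝ) = 1 ^ r := (one_pow r).symm
      _ ≤ (B * k + A) ^ r := pow_le_pow_left₀ (by norm_num) (hBA0 k) r
  -- the predicate
  set Q : ℕ → Prop := fun j => (L : ℝ) ^ m * (B * j + A) ^ r ≤ (L : ℝ) ^ j with hQdef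
  -- existence of some j with Q j
  have hex : ∃ j, Q j := by
    have hlo := isLittleO_pow_const_const_pow_of_one_lt (R := ℝ) r hL1
    have hc : (0 : ℝ) < ((L : ℝ) ^ m * (B + 1) ^ r)⁻¹ := by positivity
    have hev := hlo.def hc
    rw [Filter.eventually_atTop] at hev
    obtain ⟨n₀, hn₀⟩ := hev
    obtain ⟨n₁, hn₁⟩ := exists_nat_ge A
    refine ⟨max n₀ n₁, ?_⟩
    set j := max n₀ n₁ with hj
    have h1 := hn₀ j (le_max_left _ _)
    have hAj : A ≤ (j : ℝ) := by
      refine le_trans hn₁ ?_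
      exact_mod_cast Nat.le_max_right n₀ n₁
    rw [Real.norm_of_nonneg (by positivity : (0:ℝ) ≤ (j:ℝ) ^ r),
        Real.norm_of_nonneg (by positivity : (0:ℝ) ≤ (L:ℝ) ^ j)] at h1
    -- h1 : (j:ℝ)^r ≤ (L^m * (B+1)^r)⁻¹ * L^j
    have hBA : B * j + A ≤ (B + 1) * j := by
      have hj1 : (1:ℝ) ≤ (j:ℝ) := le_trans hA hAj
      nlinarith
    have step : (B * j + A) ^ r ≤ (B + 1) ^ r * (j : ℝ) ^ r := by
      rw [← mul_pow]
      exact pow_le_pow_left₀ (le_trans zero_le_one (hBA0 j)) hBA r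
    show (L : ℝ) ^ m * (B * j + A) ^ r ≤ (L : ℝ) ^ j
    have h2 : (L : ℝ) ^ m * (B + 1) ^ r * (j : ℝ) ^ r ≤
        (L : ℝ) ^ m * (B + 1) ^ r * (((L : ℝ) ^ m * (B + 1) ^ r)⁻¹ * (L : ℝ) ^ j) :=
      mul_le_mul_of_nonneg_left h1 (by positivity)
    have h3 : (L : ℝ) ^ m * (B + 1) ^ r * (((L : ℝ) ^ m * (B + 1) ^ r)⁻¹ * (L : ℝ) ^ j)
        = (L : ℝ) ^ j := by
      rw [mul_inv_cancel_left₀ (by positivity)]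
    calc (L : ℝ) ^ m * (B * j + A) ^ r
        ≤ (L : ℝ) ^ m * ((B + 1) ^ r * (j : ℝ) ^ r) :=
          mul_le_mul_of_nonneg_left step (by positivity)
      _ = (L : ℝ) ^ m * (B + 1) ^ r * (j : ℝ) ^ r := by ring
      _ ≤ _ := h2
      _ = (L : ℝ) ^ j := h3
  set j := Nat.find hex with hjdef
  have hQj : Q j := Nat.find_spec hex
  have hmin : ∀ j' < j, ¬ Q j' := fun j' h => Nat.find_min hex h
  -- j ≥ 1
  have hQ0 : ¬ Q 0 := by
    rw [hQdef]
    simp only [Nat.cast_zero, mul_zero, zero_add, pow_zero, not_le]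
    have h1 : (1:ℝ) ≤ (L:ℝ) ^ m * (0 * 0 + A) ^ r := by
      calc (1:ℝ) = 1 * 1 := by norm_num
        _ ≤ (L:ℝ) ^ m * (B * (0:ℕ) + A) ^ r := by
            apply mul_le_mul (one_le_pow₀ hL1.le) (hF1 0) zero_le_one
              (by positivity)
        _ = (L:ℝ) ^ m * (0 * 0 + A) ^ r := by norm_num
    calc (1:ℝ) < 3 := by norm_num
      _ ≤ (L:ℝ) := by exact_mod_cast hL
      _ = (L:ℝ) * 1 := (mul_one _).symm
      _ ≤ (L:ℝ) ^ m * (A) ^ r := by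
          apply mul_le_mul (le_self_pow₀ hL1.le hm.ne')
            (by simpa using hF1 0) zero_le_one (by positivity)
  have hj1 : 1 ≤ j := by
    rcases Nat.eq_zero_or_pos j with h | h
    · exact absurd (h ▸ hQj) hQ0
    · exact h
  -- m ≤ j
  have hmj : m ≤ j := by
    have h1 : (L:ℝ) ^ m ≤ (L:ℝ) ^ j := by
      calc (L:ℝ) ^ m = (L:ℝ) ^ m * 1 := (mul_one _).symm
        _ ≤ (L:ℝ) ^ m * (B * j + A) ^ r :=
            mul_le_mul_of_nonneg_left (hF1 j) (by positivity)
        _ ≤ (L:ℝ) ^ j := hQj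
    exact (pow_le_pow_iff_right₀ hL1).mp h1
  -- lower bound from minimality
  have hlow : (L:ℝ) ^ (j - 1) < (L:ℝ) ^ m * (B * j + A) ^ r := by
    have hnQ : ¬ Q (j - 1) := hmin (j - 1) (by omega)
    simp only [hQdef, not_le] at hnQ
    refine lt_of_lt_of_le hnQ ?_
    apply mul_le_mul_of_nonneg_left _ (by positivity)
    apply pow_le_pow_left₀ (le_trans zero_le_one (hBA0 _))
    have : ((j - 1 : ℕ) : ℝ) ≤ (j : ℝ) := by exact_mod_cast Nat.sub_le j 1
    nlinarith
  -- conclusion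
  refine ⟨j, fun N hN => ⟨N - j, ?_, ?_⟩⟩
  · exact Nat.sub_lt (lt_of_lt_of_le hj1 hN) hj1
  have hNK : N - (N - j) = j := Nat.sub_sub_self hN
  rw [hNK]
  -- compute the log
  have hcast : (N : ℝ) - ((N - j : ℕ) : ℝ) = (j : ℝ) := by
    rw [Nat.cast_sub hN]; ring
  have hrun : runCoupling L e N (N - j) = (L : ℝ) ^ (-((j : ℝ) / 2)) * e := by
    rw [runCoupling, hcast]
  have hlog : Real.log (1 / runCoupling L e N (N - j)) = B * j + A := by
    rw [hrun, one_div, Real.log_inv,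
        Real.log_mul (by positivity : ((L:ℝ) ^ (-((j:ℝ)/2)) ≠ 0)) (ne_of_gt he),
        Real.log_rpow hL0]
    rw [hAe, hBdef]; ring
  -- identify the scale parameter
  have hSP : scaleParam L r e N (N - j) = L ^ (j - m) := by
    have hFle : (B * j + A) ^ r ≤ (L:ℝ) ^ (j - m) := by
      have hprod : (L:ℝ) ^ (j - m) * (L:ℝ) ^ m = (L:ℝ) ^ j := pow_sub_mul_pow _ hmj
      have h1 : (B * j + A) ^ r * (L:ℝ) ^ m ≤ (L:ℝ) ^ (j - m) * (L:ℝ) ^ m := by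
        rw [hprod]
        calc (B * j + A) ^ r * (L:ℝ) ^ m = (L:ℝ) ^ m * (B * j + A) ^ r := by ring
          _ ≤ (L:ℝ) ^ j := hQj
      exact le_of_mul_le_mul_right h1 (by positivity)
    have hmem : L ^ (j - m) ∈ {p : ℕ | (∃ n : ℕ, p = L ^ n) ∧
        (Real.log (1 / runCoupling L e N (N - j))) ^ r ≤ (p : ℝ)} := by
      refine ⟨⟨j - m, rfl⟩, ?_⟩
      rw [hlog]
      push_cast
      exact hFle
    have hlb : ∀ p ∈ {p : ℕ | (∃ n : ℕ, p = L ^ n) ∧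
        (Real.log (1 / runCoupling L e N (N - j))) ^ r ≤ (p : ℝ)}, L ^ (j - m) ≤ p := by
      rintro p ⟨⟨n, rfl⟩, hp⟩
      rw [hlog] at hp
      have hn : j - m ≤ n := by
        by_contra hc
        push_neg at hc
        have hjm1 : 1 ≤ j - m := by omega
        have hle : (L:ℝ) ^ n ≤ (L:ℝ) ^ (j - m - 1) :=
          pow_le_pow_right₀ hL1.le (by omega)
        have hp' : (B * j + A) ^ r ≤ (L:ℝ) ^ (j - m - 1) := by
          refine le_trans ?_ hle
          calc (B * j + A) ^ r ≤ ((L ^ n : ℕ) : ℝ) := hp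
            _ = (L:ℝ) ^ n := by push_cast; ring
        have : (L:ℝ) ^ (j - 1) < (L:ℝ) ^ (j - 1) := by
          calc (L:ℝ) ^ (j - 1) < (L:ℝ) ^ m * (B * j + A) ^ r := hlow
            _ ≤ (L:ℝ) ^ m * (L:ℝ) ^ (j - m - 1) :=
                mul_le_mul_of_nonneg_left hp' (by positivity)
            _ = (L:ℝ) ^ (m + (j - m - 1)) := (pow_add _ _ _).symm
            _ = (L:ℝ) ^ (j - 1) := by congr 1; omega
        exact absurd this (lt_irrefl _)
      exact Nat.pow_le_pow_right (by omega) hn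
    rw [scaleParam]
    exact le_antisymm (Nat.sInf_le hmem) (le_csInf ⟨_, hmem⟩ hlb)
  rw [hSP, ← pow_add]
  congr 1
  omega
end
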